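/- arXiv:1002.1279 — 5 statements merged into one kernel-verified Lean document; each statement's English description precedes it below -/
import Mathlib

section
/- Let a : (0,∞) → ℝ be continuous, positive, integrable on (1,∞), and suppose γ := sup_{r∈(0,1)} r·∫_r^∞ a(s) ds < ∞. Then there exists a concave continuous function B : [0,∞) → [0,∞) such that B(r) ≥ r·∫_r^∞ a(s) ds for all r ≥ 0 and B(r)/r → 0 as r → ∞. -/
open MeasureTheory Filter Set Topology

/-- If `a` is positive and continuous on `(0,∞)`, integrable on `(1,∞)`, and
`γ := sup_{r ∈ (0,1)} r * ∫_r^∞ a(s) ds < ∞`, then there is a concave continuous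
`B : [0,∞) → [0,∞)` with `B r ≥ r * ∫_r^∞ a(s) ds` for all `r ≥ 0` and `B r / r → 0`. -/
theorem stmt0 (a : ℝ → ℝ) (ha_cont : ContinuousOn a (Set.Ioi 0))
    (ha_pos : ∀ r ∈ Set.Ioi (0:ℝ), 0 < a r)
    (ha_int : IntegrableOn a (Set.Ioi 1))
    (γ : ℝ) (hγ : IsLUB ((fun r => r * ∫ s in Set.Ioi r, a s) '' Set.Ioo 0 1) γ) :
    ∃ B : ℝ → ℝ, ContinuousOn B (Set.Ici 0) ∧ ConcaveOn ℝ (Set.Ici 0) B ∧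
      (∀ r ∈ Set.Ici (0:ℝ), 0 ≤ B r) ∧
      (∀ r ∈ Set.Ici (0:ℝ), r * ∫ s in Set.Ioi r, a s ≤ B r) ∧
      Filter.Tendsto (fun r => B r / r) Filter.atTop (nhds 0) := by
  obtain ⟨hub, -⟩ := hγ
  have hγ0 : 0 ≤ γ := by
    have h2 : ((1:ℝ)/2) * ∫ s in Set.Ioi ((1:ℝ)/2), a s ≤ γ :=
      hub ⟨1/2, by norm_num, rfl⟩
    have h3 : 0 ≤ ((1:ℝ)/2) * ∫ s in Set.Ioi ((1:ℝ)/2), a s := by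
      apply mul_nonneg (by norm_num)
      exact setIntegral_nonneg measurableSet_Ioi fun x hx =>
        (ha_pos x (Set.mem_Ioi.mpr (lt_trans (show (0:ℝ) < 1/2 by norm_num) (Set.mem_Ioi.mp hx)))).le
    linarith
  set f : ℝ → ℝ := (Set.Ioi (1:ℝ)).indicator a with hf_def
  have hf_int : Integrable f := ha_int.integrable_indicator measurableSet_Ioi
  have hf_nonneg : ∀ x, 0 ≤ f x := by
    intro x
    by_cases hx : x ∈ Set.Ioi (1:ℝ)
    · rw [hf_def, Set.indicator_of_mem hx]
      exact (ha_pos x (Set.mem_Ioi.mpr (lt_trans one_pos (Set.mem_Ioi.mp hx)))).le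
    · rw [hf_def, Set.indicator_of_notMem hx]
  set g : ℝ → ℝ := fun t => (∫ s in Set.Ioi (0:ℝ), f s) - ∫ s in (0:ℝ)..t, f s with hg_def
  have hg_cont : Continuous g := continuous_const.sub (hf_int.continuous_primitive 0)
  have hg_anti : Antitone g := by
    intro x y hxy
    have hadd : (∫ s in (0:ℝ)..x, f s) + ∫ s in x..y, f s = ∫ s in (0:ℝ)..y, f s :=
      intervalIntegral.integral_add_adjacent_intervals hf_int.intervalIntegrable
        hf_int.intervalIntegrable
    have h0 : 0 ≤ ∫ s in x..y, f s :=
      intervalIntegral.integral_nonneg hxy fun u _ => hf_nonneg u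
    simp only [hg_def]
    linarith
  have hg_eq : ∀ t, 0 ≤ t → g t = ∫ s in Set.Ioi t, f s := by
    intro t ht
    have hunion : Set.Ioc 0 t ∪ Set.Ioi t = Set.Ioi (0:ℝ) := Set.Ioc_union_Ioi_eq_Ioi ht
    have hsplit : ∫ s in Set.Ioi (0:ℝ), f s
        = (∫ s in Set.Ioc 0 t, f s) + ∫ s in Set.Ioi t, f s := by
      rw [← hunion]
      exact setIntegral_union (Set.Ioc_disjoint_Ioi le_rfl) measurableSet_Ioi
        hf_int.integrableOn hf_int.integrableOn
    have hio : ∫ s in (0:ℝ)..t, f s = ∫ s in Set.Ioc 0 t, f s :=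
      intervalIntegral.integral_of_le ht
    simp only [hg_def, hio]
    linarith
  have hg_nonneg : ∀ t, 0 ≤ t → 0 ≤ g t := by
    intro t ht
    rw [hg_eq t ht]
    exact setIntegral_nonneg measurableSet_Ioi fun x _ => hf_nonneg x
  have hga : ∀ t, 1 ≤ t → g t = ∫ s in Set.Ioi t, a s := by
    intro t ht
    rw [hg_eq t (by linarith), hf_def, setIntegral_indicator measurableSet_Ioi,
      Set.inter_eq_left.mpr (Set.Ioi_subset_Ioi ht)]
  set B : ℝ → ℝ := fun r => γ + ∫ t in (0:ℝ)..r, g t with hB_def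
  have hB_cont : Continuous B :=
    continuous_const.add
      (intervalIntegral.continuous_primitive (fun c d => hg_cont.intervalIntegrable c d) 0)
  have hB_deriv : ∀ r, HasDerivAt B (g r) r := by
    intro r
    have h := (intervalIntegral.integral_hasDerivAt_right (hg_cont.intervalIntegrable 0 r)
      (hg_cont.stronglyMeasurableAtFilter _ _) hg_cont.continuousAt)
    simpa only [hB_def] using h.const_add γ
  have hB_nonneg : ∀ r ∈ Set.Ici (0:ℝ), 0 ≤ B r := by
    intro r hr
    have h0 : 0 ≤ ∫ t in (0:ℝ)..r, g t :=
      intervalIntegral.integral_nonneg hr fun u hu => hg_nonneg u hu.1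
    simp only [hB_def]
    linarith
  have hconc : ConcaveOn ℝ (Set.Ici 0) B := by
    apply AntitoneOn.concaveOn_of_deriv (convex_Ici 0) hB_cont.continuousOn
    · intro x _
      exact (hB_deriv x).differentiableAt.differentiableWithinAt
    · intro x _ y _ hxy
      rw [(hB_deriv x).deriv, (hB_deriv y).deriv]
      exact hg_anti hxy
  have hmain : ∀ r ∈ Set.Ici (0:ℝ), r * ∫ s in Set.Ioi r, a s ≤ B r := by
    intro r hr
    by_cases h1 : r < 1
    · rcases eq_or_lt_of_le (Set.mem_Ici.mp hr : (0:ℝ) ≤ r) with h0 | h0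
      · rw [← h0]
        simpa using hB_nonneg 0 (Set.self_mem_Ici)
      · have hle : r * ∫ s in Set.Ioi r, a s ≤ γ := hub ⟨r, ⟨h0, h1⟩, rfl⟩
        have h2 : 0 ≤ ∫ t in (0:ℝ)..r, g t :=
          intervalIntegral.integral_nonneg hr fun u hu => hg_nonneg u hu.1
        simp only [hB_def]
        linarith
    · push_neg at h1
      have hg1r : g r ≤ g 1 := hg_anti h1
      have hsplit : (∫ t in (0:ℝ)..1, g t) + ∫ t in (1:ℝ)..r, g t = ∫ t in (0:ℝ)..r, g t :=
        intervalIntegral.integral_add_adjacent_intervals (hg_cont.intervalIntegrable 0 1)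
          (hg_cont.intervalIntegrable 1 r)
      have h01 : g 1 ≤ ∫ t in (0:ℝ)..1, g t := by
        have := intervalIntegral.integral_mono_on (by norm_num : (0:ℝ) ≤ 1)
          (intervalIntegrable_const (μ := volume) (c := g 1)) (hg_cont.intervalIntegrable 0 1)
          (fun x hx => hg_anti hx.2)
        simpa only [intervalIntegral.integral_const, smul_eq_mul, sub_zero, one_mul] using this
      have h1r : (r - 1) * g r ≤ ∫ t in (1:ℝ)..r, g t := by
        have := intervalIntegral.integral_mono_on h1
          (intervalIntegrable_const (μ := volume) (c := g r)) (hg_cont.intervalIntegrable 1 r)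
          (fun x hx => hg_anti hx.2)
        simpa only [intervalIntegral.integral_const, smul_eq_mul] using this
      have hgr : ∫ s in Set.Ioi r, a s = g r := (hga r h1).symm
      rw [hgr]
      simp only [hB_def]
      nlinarith
  refine ⟨B, hB_cont.continuousOn, hconc, hB_nonneg, hmain, ?_⟩
  -- limit
  have hg_lim : Tendsto g atTop (𝓝 0) := by
    have h1 : Tendsto (fun t => ∫ s in (0:ℝ)..t, f s) atTop
        (𝓝 (∫ s in Set.Ioi (0:ℝ), f s)) :=
      intervalIntegral_tendsto_integral_Ioi 0 hf_int.integrableOn tendsto_id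
    have h2 := (tendsto_const_nhds (x := ∫ s in Set.Ioi (0:ℝ), f s)
      (f := atTop (α := ℝ))).sub h1
    simpa [hg_def] using h2
  have hsq : Tendsto Real.sqrt atTop atTop := by
    apply tendsto_atTop_atTop.2
    intro b
    refine ⟨b ^ 2, fun r hr => ?_⟩
    calc b ≤ |b| := le_abs_self b
    _ = Real.sqrt (b ^ 2) := (Real.sqrt_sq_eq_abs b).symm
    _ ≤ Real.sqrt r := Real.sqrt_le_sqrt hr
  set φ : ℝ → ℝ := fun r => γ / r + g 0 / Real.sqrt r + g (Real.sqrt r) with hφ_def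
  have hφ_lim : Tendsto φ atTop (𝓝 0) := by
    have t1 : Tendsto (fun r : ℝ => γ / r) atTop (𝓝 0) :=
      tendsto_const_nhds.div_atTop tendsto_id
    have t2 : Tendsto (fun r : ℝ => g 0 / Real.sqrt r) atTop (𝓝 0) :=
      tendsto_const_nhds.div_atTop hsq
    have t3 : Tendsto (fun r : ℝ => g (Real.sqrt r)) atTop (𝓝 0) := hg_lim.comp hsq
    simpa using (t1.add t2).add t3
  apply squeeze_zero' (g := φ)
  · filter_upwards [eventually_ge_atTop (1:ℝ)] with r hr
    exact div_nonneg (hB_nonneg r (by simp; linarith)) (by linarith)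
  · filter_upwards [eventually_ge_atTop (1:ℝ)] with r hr
    have hr0 : (0:ℝ) < r := by linarith
    have hs0 : (0:ℝ) < Real.sqrt r := Real.sqrt_pos.mpr hr0
    have hsr : Real.sqrt r ≤ r := by
      calc Real.sqrt r ≤ Real.sqrt (r ^ 2) := Real.sqrt_le_sqrt (by nlinarith)
      _ = r := Real.sqrt_sq hr0.le
    -- key bound : B r ≤ γ + √r * g 0 + r * g √r
    have hsplit : (∫ t in (0:ℝ)..Real.sqrt r, g t) + ∫ t in Real.sqrt r..r, g t
        = ∫ t in (0:ℝ)..r, g t :=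
      intervalIntegral.integral_add_adjacent_intervals (hg_cont.intervalIntegrable _ _)
        (hg_cont.intervalIntegrable _ _)
    have hI1 : (∫ t in (0:ℝ)..Real.sqrt r, g t) ≤ Real.sqrt r * g 0 := by
      have := intervalIntegral.integral_mono_on hs0.le (hg_cont.intervalIntegrable _ _)
        (intervalIntegrable_const (μ := volume) (c := g 0)) (fun x hx => hg_anti hx.1)
      simpa only [intervalIntegral.integral_const, smul_eq_mul, sub_zero] using this
    have hI2 : (∫ t in Real.sqrt r..r, g t) ≤ (r - Real.sqrt r) * g (Real.sqrt r) := by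
      have := intervalIntegral.integral_mono_on hsr (hg_cont.intervalIntegrable _ _)
        (intervalIntegrable_const (μ := volume) (c := g (Real.sqrt r))) (fun x hx => hg_anti hx.1)
      simpa only [intervalIntegral.integral_const, smul_eq_mul] using this
    have hgs : 0 ≤ g (Real.sqrt r) := hg_nonneg _ hs0.le
    have hkey : B r ≤ γ + Real.sqrt r * g 0 + r * g (Real.sqrt r) := by
      simp only [hB_def]
      nlinarith
    rw [div_le_iff₀ hr0]
    have hφr : φ r * r = γ + Real.sqrt r * g 0 + r * g (Real.sqrt r) := by
      simp only [hφ_def]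
      have h1 : γ / r * r = γ := div_mul_cancel₀ γ hr0.ne'
      have h2 : g 0 / Real.sqrt r * r = Real.sqrt r * g 0 := by
        rw [div_mul_eq_mul_div, mul_comm (g 0) r, ← div_mul_eq_mul_div, Real.div_sqrt,
          mul_comm]
      rw [add_mul, add_mul, h1, h2, mul_comm (g (Real.sqrt r)) r]
    rw [hφr]
    exact hkey
  exact hφ_lim
end

section
/- With B and b_i defined as in the piecewise construction (B(r) = b_i r + Σ_{j=0}^{i-1}(b_j−b_{j+1})2^{j+1} + γ on (2^i,2^{i+1}]), for every k ≥ 1 and every i ≥ k+1 and r ∈ (2^i, 2^{i+1}], one has B(r)/r ≤ b_k + (γ + 2^k b_0)/r. Consequently limsup_{r→∞} B(r)/r ≤ b_k for all k, and since b_k → 0, B(r)/r → 0 as r → ∞. -/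
open MeasureTheory Set Filter

/-- For the piecewise-linear `B`: for every `k ≥ 1`, `i ≥ k+1` and `r ∈ (2^i, 2^{i+1}]`,
`B r / r ≤ b k + (γ + 2^k b₀)/r`; hence `limsup_{r→∞} B r / r ≤ b k` for all `k ≥ 1`,
and since `b k → 0`, `B r / r → 0` as `r → ∞`. -/
theorem stmt2 (a : ℝ → ℝ) (ha_cont : ContinuousOn a (Set.Ioi 0))
    (ha_pos : ∀ r ∈ Set.Ioi (0:ℝ), 0 < a r)
    (ha_int : ∀ r > (0:ℝ), IntegrableOn a (Set.Ioi r))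
    (γ : ℝ) (hγ : 0 ≤ γ)
    (b : ℕ → ℝ) (hb : ∀ i, b i = ∫ s in Set.Ioi ((2:ℝ)^i), a s)
    (B : ℝ → ℝ)
    (hB0 : ∀ r ∈ Set.Icc (0:ℝ) 2, B r = b 0 * r + γ)
    (hBi : ∀ i ≥ 1, ∀ r ∈ Set.Ioc ((2:ℝ)^i) ((2:ℝ)^(i+1)),
      B r = b i * r + (∑ j ∈ Finset.range i, (b j - b (j+1)) * 2^(j+1)) + γ) :
    (∀ k ≥ 1, ∀ i ≥ k + 1, ∀ r ∈ Set.Ioc ((2:ℝ)^i) ((2:ℝ)^(i+1)),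
        B r / r ≤ b k + (γ + 2^k * b 0) / r) ∧
    (∀ k ≥ 1, Filter.limsup (fun r => B r / r) Filter.atTop ≤ b k) ∧
    Filter.Tendsto (fun r => B r / r) Filter.atTop (nhds 0) := by
  classical
  have h2i : ∀ i : ℕ, (0:ℝ) < 2 ^ i := fun i => pow_pos two_pos i
  have ha_nn : ∀ i : ℕ, 0 ≤ᵐ[(volume : Measure ℝ).restrict (Set.Ioi ((2:ℝ)^i))] a := by
    intro i
    filter_upwards [ae_restrict_mem measurableSet_Ioi] with x hx
    exact (ha_pos x (Set.mem_Ioi.mpr ((h2i i).trans hx))).le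
  have hbanti : Antitone b := by
    intro i j hij
    rw [hb i, hb j]
    exact setIntegral_mono_set (ha_int _ (h2i i)) (ha_nn i)
      (HasSubset.Subset.eventuallyLE (Set.Ioi_subset_Ioi
        (pow_le_pow_right₀ one_le_two hij)))
  have hbnn : ∀ i, 0 ≤ b i := by
    intro i
    rw [hb i]
    exact setIntegral_nonneg measurableSet_Ioi
      (fun x hx => (ha_pos x (Set.mem_Ioi.mpr ((h2i i).trans hx))).le)
  -- b tends to 0
  have hInter : ⋂ n : ℕ, Set.Ioi ((2:ℝ)^n) = ∅ := by
    ext x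
    simp only [Set.mem_iInter, Set.mem_Ioi, Set.mem_empty_iff_false, iff_false, not_forall,
      not_lt]
    obtain ⟨n, hn⟩ := pow_unbounded_of_one_lt x (one_lt_two : (1:ℝ) < 2)
    exact ⟨n, hn.le⟩
  have hb0lim : Tendsto b atTop (nhds 0) := by
    have ht := tendsto_setIntegral_of_antitone (f := a) (μ := volume)
      (s := fun n : ℕ => Set.Ioi ((2:ℝ)^n)) (fun n => measurableSet_Ioi)
      (fun i j hij => Set.Ioi_subset_Ioi (pow_le_pow_right₀ one_le_two hij))
      ⟨0, by simpa using ha_int 1 one_pos⟩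
    rw [hInter] at ht
    simp only [Measure.restrict_empty, integral_zero_measure] at ht
    exact ht.congr (fun i => (hb i).symm)
  -- bound on the tail sum
  have hS2 : ∀ k m, k ≤ m →
      ∑ j ∈ Finset.Ico k m, (b j - b (j+1)) * 2^(j+1) ≤ (b k - b m) * 2^m := by
    intro k m hm
    induction m, hm using Nat.le_induction with
    | base => simp
    | succ m hm ih =>
      rw [Finset.sum_Ico_succ_top hm]
      have h1 : b m ≤ b k := hbanti hm
      have h2 : b (m+1) ≤ b m := hbanti (Nat.le_succ m)
      have h3 : (0:ℝ) < 2^m := h2i m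
      have h4 : (2:ℝ)^(m+1) = 2 * 2^m := by ring
      nlinarith [ih]
  -- the key pointwise bound
  have key : ∀ k, 1 ≤ k → ∀ i, k + 1 ≤ i → ∀ r ∈ Set.Ioc ((2:ℝ)^i) ((2:ℝ)^(i+1)),
      B r / r ≤ b k + (γ + 2^k * b 0) / r := by
    intro k hk i hi r hr
    have hr0 : (0:ℝ) < r := (h2i i).trans hr.1
    have hki : k ≤ i := le_trans (Nat.le_succ k) hi
    rw [hBi i (le_trans (Nat.le_add_left 1 k) hi) r hr]
    have hsplit : ∑ j ∈ Finset.range i, (b j - b (j+1)) * 2^(j+1)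
        = (∑ j ∈ Finset.range k, (b j - b (j+1)) * 2^(j+1))
          + ∑ j ∈ Finset.Ico k i, (b j - b (j+1)) * 2^(j+1) := by
      simp only [Finset.range_eq_Ico]
      exact (Finset.sum_Ico_consecutive _ (Nat.zero_le k) hki).symm
    have hS1 : ∑ j ∈ Finset.range k, (b j - b (j+1)) * 2^(j+1) ≤ 2^k * b 0 := by
      calc ∑ j ∈ Finset.range k, (b j - b (j+1)) * 2^(j+1)
          ≤ ∑ j ∈ Finset.range k, (b j - b (j+1)) * 2^k := by
            apply Finset.sum_le_sum
            intro j hj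
            exact mul_le_mul_of_nonneg_left
              (pow_le_pow_right₀ one_le_two (Finset.mem_range.mp hj))
              (sub_nonneg.mpr (hbanti (Nat.le_succ j)))
        _ = (b 0 - b k) * 2^k := by
            rw [← Finset.sum_mul, Finset.sum_range_sub' b k]
        _ ≤ 2^k * b 0 := by nlinarith [hbnn k, h2i k, hbnn 0]
    have hS2' := hS2 k i hki
    have hbik : b i ≤ b k := hbanti hki
    have hri : (2:ℝ)^i < r := hr.1
    rw [div_le_iff₀ hr0, add_mul, div_mul_cancel₀ _ (ne_of_gt hr0), hsplit]
    nlinarith [mul_nonneg (sub_nonneg.mpr hbik) (sub_nonneg.mpr hri.le)]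
  -- covering: every large r lies in some dyadic interval
  have hcover : ∀ (k : ℕ) (r : ℝ), (2:ℝ)^(k+1) < r →
      ∃ i, k + 1 ≤ i ∧ r ∈ Set.Ioc ((2:ℝ)^i) ((2:ℝ)^(i+1)) := by
    intro k r hr
    have hex : ∃ n : ℕ, r ≤ 2^n := (pow_unbounded_of_one_lt r one_lt_two).imp
      (fun n h => h.le)
    have hn1 : r ≤ 2 ^ (Nat.find hex) := Nat.find_spec hex
    have hnk : k + 1 < Nat.find hex := by
      by_contra h
      push_neg at h
      exact absurd (hn1.trans (pow_le_pow_right₀ one_le_two h)) (not_le.mpr hr)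
    refine ⟨Nat.find hex - 1, by omega, ?_, ?_⟩
    · exact not_le.mp (Nat.find_min hex (by omega))
    · have : Nat.find hex - 1 + 1 = Nat.find hex := by omega
      rw [this]; exact hn1
  -- eventual bound
  have hev : ∀ k, 1 ≤ k → ∀ᶠ r in atTop, B r / r ≤ b k + (γ + 2^k * b 0) / r := by
    intro k hk
    filter_upwards [eventually_gt_atTop ((2:ℝ)^(k+1))] with r hr
    obtain ⟨i, hik, hri⟩ := hcover k r hr
    exact key k hk i hik r hri
  -- eventual nonnegativity
  have hnn : ∀ᶠ r in atTop, 0 ≤ B r / r := by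
    filter_upwards [eventually_gt_atTop ((2:ℝ)^(1+1))] with r hr
    obtain ⟨i, hik, hri⟩ := hcover 1 r hr
    have hr0 : (0:ℝ) < r := (h2i i).trans hri.1
    rw [hBi i (by omega) r hri]
    apply div_nonneg _ hr0.le
    have hsum : 0 ≤ ∑ j ∈ Finset.range i, (b j - b (j+1)) * 2^(j+1) :=
      Finset.sum_nonneg fun j _ =>
        mul_nonneg (sub_nonneg.mpr (hbanti (Nat.le_succ j))) (h2i (j+1)).le
    have hbr : 0 ≤ b i * r := mul_nonneg (hbnn i) hr0.le
    linarith
  have hcob : IsCoboundedUnder (· ≤ ·) atTop (fun r : ℝ => B r / r) :=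
    isCoboundedUnder_le_of_eventually_le atTop hnn
  -- eventual upper bound by a constant
  have hub : ∀ᶠ r in atTop, B r / r ≤ b 1 + (γ + 2^1 * b 0) := by
    have hc : (0:ℝ) ≤ γ + 2^1 * b 0 := by
      have := hbnn 0; positivity
    filter_upwards [hev 1 le_rfl, eventually_ge_atTop (1:ℝ)] with r h1 h2
    have : (γ + 2^1 * b 0) / r ≤ γ + 2^1 * b 0 := div_le_self hc h2
    linarith
  -- limsup bound
  have hlimsup : ∀ k, 1 ≤ k → limsup (fun r => B r / r) atTop ≤ b k := by
    intro k hk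
    have hεb : ∀ ε : ℝ, 0 < ε → limsup (fun r => B r / r) atTop ≤ b k + ε := by
      intro ε hε
      apply limsup_le_of_le hcob
      have hc : Tendsto (fun r : ℝ => (γ + 2^k * b 0) / r) atTop (nhds 0) :=
        tendsto_const_nhds.div_atTop tendsto_id
      filter_upwards [hev k hk, hc.eventually_le_const hε] with r h1 h2
      calc B r / r ≤ b k + (γ + 2^k * b 0) / r := h1
        _ ≤ b k + ε := by linarith
    by_contra h
    push_neg at h
    have := hεb ((limsup (fun r => B r / r) atTop - b k) / 2) (by linarith)
    linarith
  -- limsup ≤ 0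
  have hlimsup0 : limsup (fun r => B r / r) atTop ≤ 0 :=
    ge_of_tendsto hb0lim (eventually_atTop.mpr ⟨1, fun k hk => hlimsup k hk⟩)
  -- liminf ≥ 0
  have hliminf0 : (0:ℝ) ≤ liminf (fun r => B r / r) atTop :=
    le_liminf_of_le (isCoboundedUnder_ge_of_eventually_le atTop hub) hnn
  refine ⟨fun k hk i hi r hr => key k hk i hi r hr, fun k hk => hlimsup k hk, ?_⟩
  exact tendsto_of_le_liminf_of_limsup_le hliminf0 hlimsup0
    (isBoundedUnder_of_eventually_le hub) (isBoundedUnder_of_eventually_ge hnn)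
end

section
/- Let M > 0 and let Ψ̃ : (0,∞) → [0,∞) be nondecreasing with Ψ̃(s) ≤ (M s/2)·Ψ̃(G) for s ≥ 2/M and Ψ̃(s) ≤ Ψ̃(2/M) for s ≤ 2/M. Let g ∈ H¹(0,M) be nonnegative with ∫_0^M g = 1 and G := sup g. Then for every y ∈ (0,M): M·Ψ̃(g(y)) ≤ M·Ψ̃(2/M) + (M/2)·Ψ̃(G) + M^{3/2}·‖∂_y Ψ(g)‖_{L²(0,M)}, and consequently Ψ̃(G) ≤ 2Ψ̃(2/M) + 2M^{1/2}‖∂_y Ψ(g)‖_{L²(0,M)}, where Ψ(g) = Ψ̃(g) + Ψ(0) differs from Ψ̃(g) by a constant. -/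
open MeasureTheory Set

/-- The key sup-bound step of Lemma 3 (Lemma `impo` in the paper): for a nondecreasing
nonnegative `Ψ̃` satisfying the stated growth bounds, and a nonnegative `g ∈ H¹(0,M)`
with unit `L¹` norm and supremum `G`, one has for every `y ∈ (0,M)`
`M Ψ̃(g(y)) ≤ M Ψ̃(2/M) + (M/2) Ψ̃(G) + M^{3/2} ‖∂_y Ψ(g)‖_{L²(0,M)}`, and consequently
`Ψ̃(G) ≤ 2 Ψ̃(2/M) + 2 M^{1/2} ‖∂_y Ψ(g)‖_{L²(0,M)}`.
Here `g ∈ H¹` is modelled by assuming `Ψ̃ ∘ g` has a pointwise derivative `p` on `[0,M]`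
with `p² ` integrable (note `∂_y Ψ(g) = ∂_y Ψ̃(g)` since `Ψ` and `Ψ̃` differ by a constant). -/
theorem stmt5 (M : ℝ) (hM : 0 < M)
    (Ψt : ℝ → ℝ)
    (hΨt_nonneg : ∀ s > (0:ℝ), 0 ≤ Ψt s)
    (hΨt_mono : ∀ s t : ℝ, 0 < s → s ≤ t → Ψt s ≤ Ψt t)
    (g : ℝ → ℝ) (hg_pos : ∀ y ∈ Set.Icc (0:ℝ) M, 0 < g y)
    (hg_mass : (∫ y in Set.Ioo (0:ℝ) M, g y) = 1)
    (hg_cont : ContinuousOn g (Set.Icc 0 M))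
    (G : ℝ) (hG : IsLUB (g '' Set.Icc 0 M) G)
    (hgrowth : ∀ s ≥ 2 / M, Ψt s ≤ (M * s / 2) * Ψt G)
    (hsmall : ∀ s : ℝ, 0 < s → s ≤ 2 / M → Ψt s ≤ Ψt (2 / M))
    (p : ℝ → ℝ)
    (hp : ∀ y ∈ Set.Icc (0:ℝ) M, HasDerivAt (fun z => Ψt (g z)) (p y) y)
    (hp2 : IntegrableOn (fun y => (p y) ^ 2) (Set.Ioo 0 M)) :
    (∀ y ∈ Set.Ioo (0:ℝ) M,
        M * Ψt (g y) ≤ M * Ψt (2 / M) + (M / 2) * Ψt G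
          + M ^ ((3:ℝ)/2) * Real.sqrt (∫ y in Set.Ioo (0:ℝ) M, (p y) ^ 2)) ∧
    Ψt G ≤ 2 * Ψt (2 / M)
      + 2 * M ^ ((1:ℝ)/2) * Real.sqrt (∫ y in Set.Ioo (0:ℝ) M, (p y) ^ 2) := by
  set C := Real.sqrt (∫ y in Set.Ioo (0:ℝ) M, (p y) ^ 2) with hCdef
  have hC0 : 0 ≤ C := Real.sqrt_nonneg _
  have hsM : 0 < Real.sqrt M := Real.sqrt_pos.2 hM
  have hsMsq : Real.sqrt M * Real.sqrt M = M := Real.mul_self_sqrt hM.le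
  have hG0 : 0 < G :=
    lt_of_lt_of_le (hg_pos 0 ⟨le_refl 0, hM.le⟩) (hG.1 ⟨0, ⟨le_refl 0, hM.le⟩, rfl⟩)
  have hΨG : 0 ≤ Ψt G := hΨt_nonneg G hG0
  have h2M : (0:ℝ) < 2 / M := by positivity
  have hΨ2M : 0 ≤ Ψt (2/M) := hΨt_nonneg _ h2M
  have hvolIoo : (volume (Set.Ioo (0:ℝ) M)).toReal = M := by
    simp [Real.volume_Ioo, ENNReal.toReal_ofReal hM.le]
  -- measurability and integrability of p
  have hpm : AEStronglyMeasurable p (volume.restrict (Set.Ioo 0 M)) := by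
    have h1 : ∀ y ∈ Set.Ioo (0:ℝ) M, deriv (fun z => Ψt (g z)) y = p y := fun y hy =>
      (hp y (Set.Ioo_subset_Icc_self hy)).deriv
    exact ((stronglyMeasurable_deriv _).aestronglyMeasurable).congr
      ((ae_restrict_iff' measurableSet_Ioo).2 (Filter.Eventually.of_forall h1))
  have hpint : IntegrableOn p (Set.Ioo 0 M) := by
    have hbound : IntegrableOn (fun y => (1 + (p y)^2)/2) (Set.Ioo 0 M) :=
      ((integrable_const 1).add hp2).div_const 2
    refine hbound.mono' hpm (Filter.Eventually.of_forall fun y => ?_)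
    rw [Real.norm_eq_abs]
    nlinarith [sq_nonneg (|p y| - 1), sq_abs (p y), abs_nonneg (p y)]
  have hrestr : volume.restrict (Set.Ioo (0:ℝ) M) = volume.restrict (Set.Icc 0 M) :=
    Measure.restrict_congr_set Ioo_ae_eq_Icc
  have hpIcc : IntegrableOn p (Set.Icc 0 M) := by
    rw [IntegrableOn, ← hrestr]; exact hpint
  have hp2Icc : IntegrableOn (fun y => (p y)^2) (Set.Icc 0 M) := by
    rw [IntegrableOn, ← hrestr]; exact hp2
  have hCsq : C^2 = ∫ y in Set.Ioo (0:ℝ) M, (p y)^2 :=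
    Real.sq_sqrt (integral_nonneg fun y => sq_nonneg _)
  -- key pointwise comparison
  have key : ∀ y ∈ Set.Icc (0:ℝ) M, ∀ z ∈ Set.Icc (0:ℝ) M,
      Ψt (g y) ≤ Ψt (g z) + Real.sqrt M * C := by
    intro y hy z hz
    have hsub : Set.uIcc z y ⊆ Set.Icc 0 M := Set.uIcc_subset_Icc hz hy
    have hint : IntervalIntegrable p volume z y := (hpIcc.mono_set hsub).intervalIntegrable
    have hftc : ∫ t in z..y, p t = Ψt (g y) - Ψt (g z) :=
      intervalIntegral.integral_eq_sub_of_hasDerivAt (fun t ht => hp t (hsub ht)) hint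
    have habs : |∫ t in z..y, p t| ≤ ∫ t in Set.uIoc z y, |p t| := by
      simpa [Real.norm_eq_abs] using
        intervalIntegral.norm_integral_le_integral_norm_uIoc (f := p) (a := z) (b := y)
          (μ := volume)
    have huIocsub : Set.uIoc z y ⊆ Set.Icc 0 M := Set.uIoc_subset_uIcc.trans hsub
    have hvol : (volume (Set.uIoc z y)).toReal ≤ M := by
      have h1 : z ⊔ y ≤ M := sup_le hz.2 hy.2
      have h2 : (0:ℝ) ≤ z ⊓ y := le_inf hz.1 hy.1
      rw [Set.uIoc, Real.volume_Ioc, ENNReal.toReal_ofReal (sub_nonneg.2 inf_le_sup)]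
      linarith
    haveI : IsFiniteMeasure (volume.restrict (Set.uIoc z y)) :=
      ⟨by rw [Measure.restrict_apply_univ, Set.uIoc, Real.volume_Ioc]
          exact ENNReal.ofReal_lt_top⟩
    have habs_int : IntegrableOn (fun t => |p t|) (Set.uIoc z y) :=
      (hpIcc.mono_set huIocsub).abs
    have hsq_int : IntegrableOn (fun t => (p t)^2) (Set.uIoc z y) :=
      hp2Icc.mono_set huIocsub
    have hsq_le : (∫ t in Set.uIoc z y, (p t)^2) ≤ C^2 := by
      rw [hCsq, setIntegral_congr_set Ioo_ae_eq_Icc]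
      exact setIntegral_mono_set hp2Icc (Filter.Eventually.of_forall fun t => sq_nonneg _)
        (HasSubset.Subset.eventuallyLE huIocsub)
    have hbound : ∀ ε : ℝ, 0 < ε →
        (∫ t in Set.uIoc z y, |p t|) ≤ ε * M / 2 + C^2 / (2*ε) := by
      intro ε hε
      have hple : ∀ t, |p t| ≤ ε/2 + (p t)^2/(2*ε) := by
        intro t
        rw [div_add_div _ _ (by norm_num) (by positivity),
          le_div_iff₀ (by positivity : (0:ℝ) < 2*(2*ε))]
        nlinarith [sq_nonneg (|p t| - ε), sq_abs (p t)]
      have h2i : IntegrableOn (fun t => ε/2 + (p t)^2/(2*ε)) (Set.uIoc z y) :=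
        (integrable_const _).add (hsq_int.div_const _)
      have hmono := integral_mono habs_int h2i hple
      rw [integral_add (integrable_const _) (hsq_int.div_const _), integral_const,
        integral_div] at hmono
      simp only [measureReal_def, Measure.restrict_apply_univ] at hmono
      have h1 : (volume (Set.uIoc z y)).toReal • (ε/2) ≤ ε * M / 2 := by
        rw [smul_eq_mul]
        calc (volume (Set.uIoc z y)).toReal * (ε/2) ≤ M * (ε/2) :=
              mul_le_mul_of_nonneg_right hvol (by positivity)
          _ = ε * M / 2 := by ring
      have h2 : (∫ t in Set.uIoc z y, (p t)^2) / (2*ε) ≤ C^2 / (2*ε) := by gcongr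
      linarith
    have hCS : (∫ t in Set.uIoc z y, |p t|) ≤ Real.sqrt M * C := by
      refine le_of_forall_pos_le_add fun ε hε => ?_
      set δ := ε / Real.sqrt M with hδdef
      have hδ0 : 0 < δ := div_pos hε hsM
      have hεδ : ε = Real.sqrt M * δ := by rw [hδdef]; field_simp [hsM.ne']
      have hCδ : 0 < C + δ := by positivity
      have h := hbound ((C + δ)/Real.sqrt M) (by positivity)
      have hne : Real.sqrt M ≠ 0 := hsM.ne'
      have e1 : (C + δ)/Real.sqrt M * M / 2 = (C + δ) * Real.sqrt M / 2 := by
        rw [div_mul_eq_mul_div, div_div,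
          div_eq_div_iff (by positivity) (by norm_num : (2:ℝ) ≠ 0)]
        linear_combination (-2*(C+δ)) * hsMsq
      have e2 : C^2 / (2*((C+δ)/Real.sqrt M)) ≤ (C + δ) * Real.sqrt M / 2 := by
        rw [div_le_iff₀ (by positivity)]
        calc C^2 ≤ (C+δ)^2 := by nlinarith
          _ = (C+δ) * Real.sqrt M / 2 * (2*((C+δ)/Real.sqrt M)) := by field_simp
      have e3 : (C+δ) * Real.sqrt M / 2 + (C+δ) * Real.sqrt M / 2
          = Real.sqrt M * C + ε := by rw [hεδ]; ring
      linarith [e1 ▸ h]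
    have hd : Ψt (g y) - Ψt (g z) ≤ Real.sqrt M * C := by
      calc Ψt (g y) - Ψt (g z) = ∫ t in z..y, p t := hftc.symm
        _ ≤ |∫ t in z..y, p t| := le_abs_self _
        _ ≤ ∫ t in Set.uIoc z y, |p t| := habs
        _ ≤ Real.sqrt M * C := hCS
    linarith
  -- continuity & integrability of Ψt ∘ g
  have hFcont : ContinuousOn (fun z => Ψt (g z)) (Set.Icc 0 M) := fun x hx =>
    ((hp x hx).continuousAt).continuousWithinAt
  have hFint : IntegrableOn (fun z => Ψt (g z)) (Set.Ioo 0 M) :=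
    (hFcont.integrableOn_compact isCompact_Icc).mono_set Set.Ioo_subset_Icc_self
  have hgint : IntegrableOn g (Set.Ioo 0 M) :=
    (hg_cont.integrableOn_compact isCompact_Icc).mono_set Set.Ioo_subset_Icc_self
  -- pointwise bound on Ψt (g z)
  have hpt : ∀ z ∈ Set.Ioo (0:ℝ) M, Ψt (g z) ≤ Ψt (2/M) + (M/2) * Ψt G * g z := by
    intro z hz
    have hzIcc := Set.Ioo_subset_Icc_self hz
    rcases le_or_gt (g z) (2/M) with h | h
    · have h1 := hsmall (g z) (hg_pos z hzIcc) h
      have hnn : 0 ≤ M/2 * Ψt G * g z :=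
        mul_nonneg (mul_nonneg (by linarith) hΨG) (hg_pos z hzIcc).le
      linarith
    · have h1 := hgrowth (g z) h.le
      have he : M * g z / 2 * Ψt G = M/2 * Ψt G * g z := by ring
      linarith
  have hintbound : (∫ z in Set.Ioo (0:ℝ) M, Ψt (g z)) ≤ M * Ψt (2/M) + (M/2) * Ψt G := by
    have h2i : IntegrableOn (fun z => Ψt (2/M) + (M/2)*Ψt G * g z) (Set.Ioo 0 M) :=
      (integrable_const _).add (hgint.const_mul _)
    have hmono := setIntegral_mono_on hFint h2i measurableSet_Ioo hpt
    rw [integral_add (integrable_const _) (hgint.const_mul _), integral_const,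
      integral_const_mul, hg_mass] at hmono
    simp only [measureReal_def, Measure.restrict_apply_univ, hvolIoo, smul_eq_mul] at hmono
    linarith
  have hM32 : M ^ ((3:ℝ)/2) = M * Real.sqrt M := by
    rw [show ((3:ℝ)/2) = 1 + 1/2 by norm_num, Real.rpow_add hM, Real.rpow_one,
      ← Real.sqrt_eq_rpow]
  -- part 1 for y in Icc
  have part1 : ∀ y ∈ Set.Icc (0:ℝ) M, M * Ψt (g y) ≤ M * Ψt (2/M) + (M/2)*Ψt G
      + M^((3:ℝ)/2) * C := by
    intro y hy
    have hmono : (∫ _z in Set.Ioo (0:ℝ) M, Ψt (g y))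
        ≤ ∫ z in Set.Ioo (0:ℝ) M, (Ψt (g z) + Real.sqrt M * C) := by
      refine setIntegral_mono_on (integrable_const _) (hFint.add (integrable_const _))
        measurableSet_Ioo fun z hz => ?_
      exact key y hy z (Set.Ioo_subset_Icc_self hz)
    rw [integral_add hFint (integrable_const _), integral_const, integral_const] at hmono
    simp only [measureReal_def, Measure.restrict_apply_univ, hvolIoo, smul_eq_mul] at hmono
    rw [hM32]
    nlinarith [hintbound]
  obtain ⟨y₀, hy₀, hmax⟩ := isCompact_Icc.exists_isMaxOn ⟨0, le_refl 0, hM.le⟩ hg_cont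
  have hGy : G = g y₀ :=
    le_antisymm (hG.2 (fun x ⟨a, ha, hax⟩ => hax ▸ hmax ha)) (hG.1 ⟨y₀, hy₀, rfl⟩)
  refine ⟨fun y hy => part1 y (Set.Ioo_subset_Icc_self hy), ?_⟩
  have h2 := part1 y₀ hy₀
  rw [← hGy, hM32] at h2
  have hM12 : M ^ ((1:ℝ)/2) = Real.sqrt M := by
    rw [Real.sqrt_eq_rpow]
  rw [hM12]
  nlinarith [mul_nonneg hsM.le hC0]
end

section
/- Let a : (0,∞) → ℝ be positive, continuous, and integrable on (1,∞). Define Ψ(r) := ∫_{1/r}^1 a(s) ds, Ψ(0) := −∫_1^∞ a(s) ds, Ψ̃ := Ψ − Ψ(0), Ψ₁ with Ψ₁(1)=0 and Ψ₁'(r) = r^{-1} a(1/r), and the functional 𝓛₁(g) := (1/2)‖∂_y Ψ(g)‖²_{L²(0,M)} + ∫_0^M (Ψ(g) − M Ψ₁(g)) dy. Then for every M > 0 there is a constant μ_M > 0 depending only on M and a such that every nonnegative g ∈ H¹(0,M) with ∫_0^M g dy = 1 satisfies ‖Ψ̃(g)‖²_{L^∞(0,M)} ≤ 32 M · 𝓛₁(g)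 + μ_M. -/
open MeasureTheory Set intervalIntegral

set_option maxHeartbeats 2000000

/-- Lemma `impo`: with `Ψ(r) = ∫_{1/r}^1 a(s) ds`, `Ψ(0) = −∫_1^∞ a(s) ds`,
`Ψ̃ = Ψ − Ψ(0)`, `Ψ₁(r) = ∫_1^r s⁻¹ a(1/s) ds`, and
`𝓛₁(g) = (1/2)‖∂_y Ψ(g)‖²_{L²(0,M)} + ∫_0^M (Ψ(g) − M Ψ₁(g))`,
for every `M > 0` there is `μ_M > 0` depending only on `M` and `a` such that every
nonnegative `g ∈ H¹(0,M)` with `∫_0^M g = 1` satisfies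
`‖Ψ̃(g)‖²_{L^∞(0,M)} ≤ 32 M 𝓛₁(g) + μ_M` (stated pointwise on `[0,M]`).
Here `g ∈ H¹` is modelled by a pointwise derivative `p` of `Ψ ∘ g` with `p²` integrable. -/
theorem stmt6 (a : ℝ → ℝ) (ha_cont : ContinuousOn a (Set.Ioi 0))
    (ha_pos : ∀ r ∈ Set.Ioi (0:ℝ), 0 < a r)
    (ha_int : IntegrableOn a (Set.Ioi 1))
    (Ψ Ψ₁ : ℝ → ℝ) (Ψ0 : ℝ)
    (hΨ : ∀ r > (0:ℝ), Ψ r = ∫ s in (r⁻¹)..1, a s)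
    (hΨ0 : Ψ0 = -∫ s in Set.Ioi (1:ℝ), a s)
    (hΨ₁ : ∀ r > (0:ℝ), Ψ₁ r = ∫ s in (1:ℝ)..r, s⁻¹ * a s⁻¹) :
    ∀ M > (0:ℝ), ∃ μ > (0:ℝ),
      ∀ g p : ℝ → ℝ,
        (∀ y ∈ Set.Icc (0:ℝ) M, 0 < g y) →
        ContinuousOn g (Set.Icc 0 M) →
        (∫ y in Set.Ioo (0:ℝ) M, g y) = 1 →
        (∀ y ∈ Set.Icc (0:ℝ) M, HasDerivAt (fun z => Ψ (g z)) (p y) y) →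
        IntegrableOn (fun y => (p y) ^ 2) (Set.Ioo 0 M) →
        ∀ y ∈ Set.Icc (0:ℝ) M,
          (Ψ (g y) - Ψ0) ^ 2 ≤
            32 * M * ((1/2) * (∫ y in Set.Ioo (0:ℝ) M, (p y) ^ 2)
              + ∫ y in Set.Ioo (0:ℝ) M, (Ψ (g y) - M * Ψ₁ (g y))) + μ := by
  intro M hM
  have ha_nn : ∀ r ∈ Set.Ioi (0:ℝ), 0 ≤ a r := fun r hr => (ha_pos r hr).le
  -- integrability of a on (x, ∞) for x > 0
  have haI : ∀ x : ℝ, 0 < x → IntegrableOn a (Set.Ioi x) := by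
    intro x hx
    rcases le_or_gt x 1 with h | h
    · rw [← Ioc_union_Ioi_eq_Ioi h, integrableOn_union]
      refine ⟨?_, ha_int⟩
      have hc : ContinuousOn a (Set.Icc x 1) :=
        ha_cont.mono (fun t ht => lt_of_lt_of_le hx ht.1)
      exact hc.integrableOn_Icc.mono_set Ioc_subset_Icc_self
    · exact ha_int.mono_set (Ioi_subset_Ioi h.le)
  -- key identity : Ψ r - Ψ0 = ∫_{Ioi r⁻¹} a
  have key : ∀ r : ℝ, 0 < r → Ψ r - Ψ0 = ∫ s in Set.Ioi r⁻¹, a s := by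
    intro r hr
    have hrinv : 0 < r⁻¹ := inv_pos.2 hr
    rw [hΨ r hr, hΨ0, sub_neg_eq_add]
    rcases le_or_gt r⁻¹ 1 with h | h
    · rw [intervalIntegral.integral_of_le h, ← Ioc_union_Ioi_eq_Ioi h]
      have hIoc : IntegrableOn a (Set.Ioc r⁻¹ 1) := by
        have hc : ContinuousOn a (Set.Icc r⁻¹ 1) :=
          ha_cont.mono (fun t ht => lt_of_lt_of_le hrinv ht.1)
        exact hc.integrableOn_Icc.mono_set Ioc_subset_Icc_self
      exact (setIntegral_union (Ioc_disjoint_Ioi le_rfl) measurableSet_Ioi hIoc ha_int).symm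
    · have hsplit : ∫ s in Set.Ioi (1:ℝ), a s
          = (∫ s in Set.Ioc 1 r⁻¹, a s) + ∫ s in Set.Ioi r⁻¹, a s := by
        rw [← setIntegral_union (Ioc_disjoint_Ioi le_rfl) measurableSet_Ioi
          (ha_int.mono_set Ioc_subset_Ioi_self) (haI _ hrinv),
          Ioc_union_Ioi_eq_Ioi h.le]
      rw [intervalIntegral.integral_symm, intervalIntegral.integral_of_le h.le, hsplit]
      ring
  -- nonnegativity of Ψ̃
  have tilde0 : ∀ r : ℝ, 0 < r → 0 ≤ Ψ r - Ψ0 := by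
    intro r hr
    rw [key r hr]
    refine setIntegral_nonneg measurableSet_Ioi (fun x hx => ha_nn x ?_)
    exact lt_trans (inv_pos.2 hr) hx
  -- monotonicity of Ψ̃
  have tmono : ∀ r₁ r₂ : ℝ, 0 < r₁ → r₁ ≤ r₂ → Ψ r₁ - Ψ0 ≤ Ψ r₂ - Ψ0 := by
    intro r₁ r₂ h1 h12
    have h2 : 0 < r₂ := h1.trans_le h12
    rw [key r₁ h1, key r₂ h2]
    refine setIntegral_mono_set (haI _ (inv_pos.2 h2)) ?_ ?_
    · filter_upwards [ae_restrict_mem measurableSet_Ioi] with x hx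
      exact ha_nn x (lt_trans (inv_pos.2 h2) hx)
    · exact HasSubset.Subset.eventuallyLE (Ioi_subset_Ioi (inv_anti₀ h1 h12))
  -- Ψ₁ r ≤ r * (Ψ r - Ψ0)
  have psi1le : ∀ r : ℝ, 0 < r → Ψ₁ r ≤ r * (Ψ r - Ψ0) := by
    intro r hr
    rcases le_or_gt r 1 with h | h
    · have h0 : Ψ₁ r ≤ 0 := by
        rw [hΨ₁ r hr, intervalIntegral.integral_symm]
        have : 0 ≤ ∫ s in r..(1:ℝ), s⁻¹ * a s⁻¹ := by
          refine intervalIntegral.integral_nonneg h (fun u hu => ?_)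
          have hu0 : 0 < u := lt_of_lt_of_le hr hu.1
          exact mul_nonneg (inv_nonneg.2 hu0.le) (ha_nn _ (inv_pos.2 hu0))
        linarith
      exact h0.trans (mul_nonneg hr.le (tilde0 r hr))
    · -- r > 1 : change of variables
      have hne : ∀ x ∈ Set.uIcc (1:ℝ) r, x ≠ 0 := by
        intro x hx
        rw [Set.uIcc_of_le h.le] at hx
        exact (lt_of_lt_of_le one_pos hx.1).ne'
      have hsub : (∫ x in (1:ℝ)..r, (-(x ^ 2)⁻¹) • a ((fun y : ℝ => y⁻¹) x))
          = ∫ u in ((1:ℝ)⁻¹)..(r⁻¹), a u := by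
        refine intervalIntegral.integral_comp_smul_deriv'
          (f := fun y : ℝ => y⁻¹) (f' := fun x => -(x ^ 2)⁻¹) (g := a)
          (fun x hx => hasDerivAt_inv (hne x hx)) ?_ ?_
        · refine (((continuous_pow 2).continuousOn).inv₀ ?_).neg
          intro x hx
          exact pow_ne_zero 2 (hne x hx)
        · refine ha_cont.mono ?_
          rintro t ⟨x, hx, rfl⟩
          rw [Set.uIcc_of_le h.le] at hx
          exact inv_pos.2 (lt_of_lt_of_le one_pos hx.1)
      have hsub' : (∫ x in (1:ℝ)..r, (x ^ 2)⁻¹ * a x⁻¹) = ∫ u in r⁻¹..(1:ℝ), a u := by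
        have h1 : (∫ x in (1:ℝ)..r, (-(x ^ 2)⁻¹) • a ((fun y : ℝ => y⁻¹) x))
            = -∫ x in (1:ℝ)..r, (x ^ 2)⁻¹ * a x⁻¹ := by
          rw [← intervalIntegral.integral_neg]
          congr 1 with x
          simp [smul_eq_mul]
        have h2 : (∫ u in ((1:ℝ)⁻¹)..(r⁻¹), a u) = -∫ u in r⁻¹..(1:ℝ), a u := by
          rw [intervalIntegral.integral_symm]; norm_num
        rw [h1, h2] at hsub
        linarith
      have hcont1 : ContinuousOn (fun x : ℝ => x⁻¹) (Set.uIcc (1:ℝ) r) :=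
        continuousOn_id.inv₀ hne
      have hconta : ContinuousOn (fun x : ℝ => a x⁻¹) (Set.uIcc (1:ℝ) r) := by
        refine ha_cont.comp hcont1 ?_
        intro x hx
        rw [Set.uIcc_of_le h.le] at hx
        exact inv_pos.2 (lt_of_lt_of_le one_pos hx.1)
      have hmono : (∫ x in (1:ℝ)..r, x⁻¹ * a x⁻¹)
          ≤ ∫ x in (1:ℝ)..r, r * ((x ^ 2)⁻¹ * a x⁻¹) := by
        refine intervalIntegral.integral_mono_on h.le ?_ ?_ ?_
        · exact (hcont1.mul hconta).intervalIntegrable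
        · exact (continuousOn_const.mul
            ((((continuous_pow 2).continuousOn).inv₀
              (fun x hx => pow_ne_zero 2 (hne x hx))).mul hconta)).intervalIntegrable
        · intro x hx
          have hx0 : 0 < x := lt_of_lt_of_le one_pos hx.1
          have han : 0 ≤ a x⁻¹ := ha_nn _ (inv_pos.2 hx0)
          have hxr : x⁻¹ ≤ r * (x ^ 2)⁻¹ := by
            rw [mul_comm, inv_mul_eq_div, le_div_iff₀ (by positivity : (0:ℝ) < x ^ 2)]
            have hxe : x⁻¹ * x ^ 2 = x := by
              field_simp
            rw [hxe]
            exact hx.2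
          calc x⁻¹ * a x⁻¹ ≤ (r * (x ^ 2)⁻¹) * a x⁻¹ :=
                mul_le_mul_of_nonneg_right hxr han
            _ = r * ((x ^ 2)⁻¹ * a x⁻¹) := by ring
      have hIocle : (∫ u in r⁻¹..(1:ℝ), a u) ≤ Ψ r - Ψ0 := by
        rw [key r hr, intervalIntegral.integral_of_le (inv_le_one_of_one_le₀ h.le)]
        refine setIntegral_mono_set (haI _ (inv_pos.2 hr)) ?_ ?_
        · filter_upwards [ae_restrict_mem measurableSet_Ioi] with x hx
          exact ha_nn x (lt_trans (inv_pos.2 hr) hx)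
        · exact HasSubset.Subset.eventuallyLE Ioc_subset_Ioi_self
      rw [hΨ₁ r hr]
      calc (∫ s in (1:ℝ)..r, s⁻¹ * a s⁻¹)
          ≤ ∫ x in (1:ℝ)..r, r * ((x ^ 2)⁻¹ * a x⁻¹) := hmono
        _ = r * ∫ x in (1:ℝ)..r, (x ^ 2)⁻¹ * a x⁻¹ := by
            rw [intervalIntegral.integral_const_mul]
        _ = r * ∫ u in r⁻¹..(1:ℝ), a u := by rw [hsub']
        _ ≤ r * (Ψ r - Ψ0) := mul_le_mul_of_nonneg_left hIocle hr.le
  -- constants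
  have hc0nn : (0:ℝ) ≤ ∫ s in Set.Ioi (1:ℝ), a s :=
    setIntegral_nonneg measurableSet_Ioi (fun x (hx : x ∈ Ioi (1:ℝ)) => ha_nn x (mem_Ioi.2 (lt_trans one_pos (mem_Ioi.1 hx))))
  have hΨ0' : Ψ0 ≤ 0 := by rw [hΨ0]; linarith
  have h2M : (0:ℝ) < 2 / M := by positivity
  obtain ⟨K, hKdef⟩ : ∃ x : ℝ, x = Ψ (2 / M) - Ψ0 := ⟨_, rfl⟩
  have hK : 0 ≤ K := by rw [hKdef]; exact tilde0 _ h2M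
  have hμ1 : (0:ℝ) ≤ K ^ 2 := sq_nonneg K
  have hμ2 : (0:ℝ) ≤ (2 * K + 32 * M ^ 2) ^ 2 / 60 := by positivity
  have hμ3 : (0:ℝ) ≤ 32 * M ^ 2 * K := mul_nonneg (by positivity) hK
  have hμ4 : (0:ℝ) ≤ 32 * M ^ 2 * (-Ψ0) := mul_nonneg (by positivity) (neg_nonneg.2 hΨ0')
  refine ⟨K ^ 2 + (2 * K + 32 * M ^ 2) ^ 2 / 60 + 32 * M ^ 2 * K + 32 * M ^ 2 * (-Ψ0) + 1,
    by linarith, ?_⟩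
  intro g p hg_pos hg_cont hg_int hderiv hp2
  have hmeas : MeasurableSet (Set.Ioo (0:ℝ) M) := measurableSet_Ioo
  have hvol : volume.real (Set.Ioo (0:ℝ) M) = M := by
    rw [measureReal_def, Real.volume_Ioo, sub_zero, ENNReal.toReal_ofReal hM.le]
  have hvolfin : volume (Set.Ioo (0:ℝ) M) < ⊤ := by
    rw [Real.volume_Ioo]; exact ENNReal.ofReal_lt_top
  -- measurability and integrability of p
  have hpmeas : AEStronglyMeasurable p (volume.restrict (Set.Ioo 0 M)) := by
    refine ((measurable_deriv (fun z => Ψ (g z))).aestronglyMeasurable).congr ?_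
    filter_upwards [ae_restrict_mem hmeas] with y hy
    exact (hderiv y (Ioo_subset_Icc_self hy)).deriv
  have hpint : IntegrableOn p (Set.Ioo 0 M) := by
    have hb : IntegrableOn (fun y => (1 + p y ^ 2) / 2) (Set.Ioo 0 M) :=
      ((integrableOn_const hvolfin.ne).add hp2).div_const 2
    refine hb.mono' hpmeas ?_
    filter_upwards with y
    rw [Real.norm_eq_abs]
    nlinarith [sq_nonneg (|p y| - 1), sq_abs (p y), abs_nonneg (p y)]
  have hpabs : IntegrableOn (fun y => |p y|) (Set.Ioo 0 M) := hpint.abs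
  obtain ⟨P, hPdef⟩ : ∃ x : ℝ, x = ∫ y in Set.Ioo (0:ℝ) M, p y ^ 2 := ⟨_, rfl⟩
  obtain ⟨I, hIdef⟩ : ∃ x : ℝ, x = ∫ y in Set.Ioo (0:ℝ) M, |p y| := ⟨_, rfl⟩
  have hPnn : 0 ≤ P := by
    rw [hPdef]; exact setIntegral_nonneg hmeas (fun y _ => sq_nonneg _)
  have hInn : 0 ≤ I := by
    rw [hIdef]; exact setIntegral_nonneg hmeas (fun y _ => abs_nonneg _)
  -- Cauchy–Schwarz : I² ≤ M * P
  have hI2 : I ^ 2 ≤ M * P := by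
    have hb : ∀ c : ℝ, 0 < c → I ≤ (c * P + M / c) / 2 := by
      intro c hc
      have hptw : ∀ y ∈ Set.Ioo (0:ℝ) M, |p y| ≤ (c * p y ^ 2 + 1 / c) / 2 := by
        intro y _
        have h1 : 0 ≤ (c * |p y| - 1) ^ 2 := sq_nonneg _
        have h2 : |p y| ^ 2 = p y ^ 2 := sq_abs _
        have h2' : c ^ 2 * |p y| ^ 2 = c ^ 2 * p y ^ 2 := by rw [h2]
        have h3 : c * (2 * |p y|) ≤ c * (c * p y ^ 2) + 1 := by nlinarith [h1, h2']
        have h4 : 2 * |p y| ≤ c * p y ^ 2 + 1 / c := by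
          refine le_of_mul_le_mul_left ?_ hc
          have he : c * (c * p y ^ 2 + 1 / c) = c * (c * p y ^ 2) + 1 := by
            rw [mul_add, mul_one_div, div_self hc.ne']
          rw [he]
          exact h3
        linarith
      have hint2 : IntegrableOn (fun y => (c * p y ^ 2 + 1 / c) / 2) (Set.Ioo 0 M) :=
        ((hp2.const_mul c).add (integrableOn_const hvolfin.ne)).div_const 2
      have := setIntegral_mono_on hpabs hint2 hmeas hptw
      rw [MeasureTheory.integral_div, MeasureTheory.integral_add (hp2.const_mul c)
        (integrableOn_const hvolfin.ne), MeasureTheory.integral_const_mul,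
        setIntegral_const, hvol, smul_eq_mul] at this
      rw [← hPdef, ← hIdef] at this
      calc I ≤ ((c * P + M * (1 / c))) / 2 := this
        _ = (c * P + M / c) / 2 := by ring_nf
    rcases eq_or_lt_of_le hPnn with hP0 | hP0
    · have hI0 : I ≤ 0 := by
        refine le_of_forall_pos_le_add (fun ε hε => ?_)
        have := hb (M / ε) (by positivity)
        rw [← hP0] at this
        have hMe : M / (M / ε) = ε := by field_simp
        calc I ≤ (M / ε * 0 + M / (M / ε)) / 2 := this
          _ = ε / 2 := by rw [hMe]; ring
          _ ≤ 0 + ε := by linarith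
      have : I = 0 := le_antisymm hI0 hInn
      rw [this, ← hP0]; norm_num
    · obtain ⟨s, hs⟩ : ∃ x : ℝ, x = Real.sqrt (M / P) := ⟨_, rfl⟩
      have hspos : 0 < s := by rw [hs]; exact Real.sqrt_pos.2 (by positivity)
      have hs2 : s ^ 2 = M / P := by rw [hs]; exact Real.sq_sqrt (by positivity)
      have hMeq : M = s ^ 2 * P := by rw [hs2]; field_simp
      have hdiv : M / s = s * P := by
        rw [hMeq]; field_simp
      have hIs : I ≤ s * P := by
        have := hb s hspos
        rw [hdiv] at this
        linarith
      calc I ^ 2 ≤ (s * P) ^ 2 := by nlinarith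
        _ = s ^ 2 * P ^ 2 := by ring
        _ = M * P := by rw [hs2]; field_simp
  -- a point where g is small
  have hgint : IntegrableOn g (Set.Ioo 0 M) :=
    hg_cont.integrableOn_Icc.mono_set Ioo_subset_Icc_self
  obtain ⟨y₀, hy₀, hgy₀⟩ : ∃ y₀ ∈ Set.Icc (0:ℝ) M, g y₀ ≤ 2 / M := by
    by_contra hcon
    push_neg at hcon
    have h2 : (∫ _ in Set.Ioo (0:ℝ) M, (2 / M : ℝ)) ≤ ∫ y in Set.Ioo (0:ℝ) M, g y :=
      setIntegral_mono_on (integrableOn_const hvolfin.ne) hgint hmeas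
        (fun y hy => (hcon y (Ioo_subset_Icc_self hy)).le)
    rw [setIntegral_const, hvol, smul_eq_mul, hg_int] at h2
    have : M * (2 / M) = 2 := by field_simp
    rw [this] at h2
    linarith
  have hKy₀ : Ψ (g y₀) - Ψ0 ≤ K := by
    rw [hKdef]; exact tmono _ _ (hg_pos y₀ hy₀) hgy₀
  -- uniform bound on Ψ̃(g)
  have hpIcc : IntegrableOn p (Set.Icc 0 M) :=
    (integrableOn_Icc_iff_integrableOn_Ioo).2 hpint
  have hpabsIcc : IntegrableOn (fun y => |p y|) (Set.Icc 0 M) :=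
    (integrableOn_Icc_iff_integrableOn_Ioo).2 hpabs
  have hubd : ∀ y ∈ Set.Icc (0:ℝ) M, Ψ (g y) - Ψ0 ≤ K + I := by
    intro y hy
    have hsub : Set.uIcc y₀ y ⊆ Set.Icc 0 M := Set.uIcc_subset_Icc hy₀ hy
    have hftc : ∫ t in y₀..y, p t = Ψ (g y) - Ψ (g y₀) := by
      refine intervalIntegral.integral_eq_sub_of_hasDerivAt
        (fun t ht => hderiv t (hsub ht)) ?_
      exact (hpIcc.mono_set hsub).intervalIntegrable
    have habs : |∫ t in y₀..y, p t| ≤ I := by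
      have h1 : |∫ t in y₀..y, p t| ≤ ∫ t in Set.uIoc y₀ y, |p t| := by
        simpa [Real.norm_eq_abs] using
          (intervalIntegral.norm_integral_le_integral_norm_uIoc (f := p) (a := y₀) (b := y)
            (μ := volume))
      have h2 : (∫ t in Set.uIoc y₀ y, |p t|) ≤ ∫ t in Set.Icc (0:ℝ) M, |p t| := by
        refine setIntegral_mono_set hpabsIcc ?_ ?_
        · filter_upwards with t using abs_nonneg _
        · exact HasSubset.Subset.eventuallyLE (Set.uIoc_subset_uIcc.trans hsub)
      have h3 : (∫ t in Set.Icc (0:ℝ) M, |p t|) = I := by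
        rw [hIdef]; exact integral_Icc_eq_integral_Ioo
      linarith
    have := abs_le.1 habs
    linarith [hKy₀, this.2, hftc ▸ this.2]
  -- lower bound on the linear part
  obtain ⟨L, hLdef⟩ : ∃ x : ℝ,
      x = ∫ y in Set.Ioo (0:ℝ) M, (Ψ (g y) - M * Ψ₁ (g y)) := ⟨_, rfl⟩
  have hu_cont : ContinuousOn (fun y => Ψ (g y)) (Set.Icc 0 M) :=
    fun y hy => ((hderiv y hy).continuousAt).continuousWithinAt
  have hLb : Ψ0 * M - M * (K + I) ≤ L := by
    have hlow : ∀ y ∈ Set.Ioo (0:ℝ) M,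
        Ψ0 - (M * (K + I)) * g y ≤ Ψ (g y) - M * Ψ₁ (g y) := by
      intro y hy
      have hy' := Ioo_subset_Icc_self hy
      have h1 : Ψ₁ (g y) ≤ g y * (Ψ (g y) - Ψ0) := psi1le _ (hg_pos y hy')
      have h2 : Ψ (g y) - Ψ0 ≤ K + I := hubd y hy'
      have h3 : 0 ≤ Ψ (g y) - Ψ0 := tilde0 _ (hg_pos y hy')
      have h4 : 0 < g y := hg_pos y hy'
      have e1 : g y * (Ψ (g y) - Ψ0) ≤ g y * (K + I) := mul_le_mul_of_nonneg_left h2 h4.le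
      have e2 : M * Ψ₁ (g y) ≤ M * (g y * (K + I)) :=
        mul_le_mul_of_nonneg_left (h1.trans e1) hM.le
      have e3 : M * (g y * (K + I)) = M * (K + I) * g y := by ring
      linarith
    by_cases hLi : IntegrableOn (fun y => Ψ (g y) - M * Ψ₁ (g y)) (Set.Ioo 0 M)
    · have hlow_int : IntegrableOn (fun y => Ψ0 - (M * (K + I)) * g y) (Set.Ioo 0 M) :=
        (integrableOn_const hvolfin.ne).sub (hgint.const_mul _)
      have hm := setIntegral_mono_on hlow_int hLi hmeas hlow
      rw [MeasureTheory.integral_sub (integrableOn_const (C := Ψ0) hvolfin.ne) (hgint.const_mul _),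
        setIntegral_const, hvol, smul_eq_mul, MeasureTheory.integral_const_mul, hg_int] at hm
      rw [← hLdef] at hm
      calc Ψ0 * M - M * (K + I) = M * Ψ0 - M * (K + I) * 1 := by ring
        _ ≤ L := hm
    · rw [hLdef, integral_undef hLi]
      nlinarith [hK, hInn, hM, hΨ0']
  -- conclusion
  intro y hy
  rw [← hPdef, ← hLdef]
  have h1 : Ψ (g y) - Ψ0 ≤ K + I := hubd y hy
  have h2 : 0 ≤ Ψ (g y) - Ψ0 := tilde0 _ (hg_pos y hy)
  have hsq : (Ψ (g y) - Ψ0) ^ 2 ≤ (K + I) ^ 2 := pow_le_pow_left₀ h2 h1 2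
  have hA : (Ψ (g y) - Ψ0) ^ 2 ≤ K ^ 2 + 2 * K * I + M * P := by
    have he : (K + I) ^ 2 = K ^ 2 + 2 * K * I + I ^ 2 := by ring
    linarith [hsq, hI2]
  have hB1 : 32 * M * (Ψ0 * M - M * (K + I)) ≤ 32 * M * L :=
    mul_le_mul_of_nonneg_left hLb (by positivity)
  have hAM : (2 * K + 32 * M ^ 2) * I ≤ (2 * K + 32 * M ^ 2) ^ 2 / 60 + 15 * I ^ 2 := by
    nlinarith [sq_nonneg (2 * K + 32 * M ^ 2 - 30 * I)]
  have hI2' : 15 * I ^ 2 ≤ 15 * (M * P) := by linarith [hI2]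
  linarith [hA, hB1, hAM, hI2']
end

section
/- Let M > 0 and let E₁(h) := (1/2)‖∂_y h‖²_{L²(0,M)} + ∫_0^M 1_{(−∞,0)}(h(y))·h(y) dy for h ∈ H¹(0,M). Then for every h ∈ H¹(0,M) satisfying ∫_0^M Ψ^{-1}(h(y)) dy = 1 (with Ψ as above, increasing with Ψ(1)=0), one has E₁(h) ≥ (1/4)‖∂_y h‖²_{L²(0,M)} − M³ − M|Ψ(1/M)|. -/
open MeasureTheory Set

/-- Lower bound for `E₁(h) = (1/2)‖∂_y h‖²_{L²(0,M)} + ∫_0^M 1_{h<0} h`: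
for every `h ∈ H¹(0,M)` with `∫_0^M Ψ⁻¹(h) dy = 1` (with `Ψ` increasing, `C¹`,
`Ψ(1) = 0`), one has `E₁(h) ≥ (1/4)‖∂_y h‖²_{L²(0,M)} − M³ − M |Ψ(1/M)|`. -/
theorem stmt14 (M : ℝ) (hM : 0 < M)
    (Ψ : ℝ → ℝ) (hΨ_mono : StrictMonoOn Ψ (Set.Ioi 0))
    (hΨ_C1 : ContDiffOn ℝ 1 Ψ (Set.Ioi 0)) (hΨ1 : Ψ 1 = 0)
    (Φ : ℝ → ℝ) (hΦ : ∀ r > (0:ℝ), Φ (Ψ r) = r)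
    (h h' : ℝ → ℝ) (hh_cont : ContinuousOn h (Set.Icc 0 M))
    (hh_deriv : ∀ y ∈ Set.Icc (0:ℝ) M, HasDerivAt h (h' y) y)
    (hh'2 : IntegrableOn (fun y => (h' y) ^ 2) (Set.Ioo 0 M))
    (hrange : ∀ y ∈ Set.Icc (0:ℝ) M, ∃ r > (0:ℝ), Ψ r = h y)
    (hmass : (∫ y in Set.Ioo (0:ℝ) M, Φ (h y)) = 1) :
    (1/2) * (∫ y in Set.Ioo (0:ℝ) M, (h' y) ^ 2)
        + (∫ y in Set.Ioo (0:ℝ) M, if h y < 0 then h y else 0)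
      ≥ (1/4) * (∫ y in Set.Ioo (0:ℝ) M, (h' y) ^ 2) - M ^ 3 - M * |Ψ M⁻¹| := by
  set D := ∫ y in Set.Ioo (0:ℝ) M, (h' y) ^ 2 with hDdef
  have hμ : volume (Set.Ioo (0:ℝ) M) = ENNReal.ofReal M := by
    rw [Real.volume_Ioo]; simp
  have hμfin : volume (Set.Ioo (0:ℝ) M) < ⊤ := by
    rw [hμ]; exact ENNReal.ofReal_lt_top
  have hμreal : (volume (Set.Ioo (0:ℝ) M)).toReal = M := by
    rw [hμ, ENNReal.toReal_ofReal hM.le]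
  -- measurability of h'
  have hmeas : AEStronglyMeasurable h' (volume.restrict (Set.Ioo (0:ℝ) M)) := by
    have hae : ∀ᵐ y ∂(volume.restrict (Set.Ioo (0:ℝ) M)), deriv h y = h' y := by
      filter_upwards [ae_restrict_mem measurableSet_Ioo] with y hy
      exact (hh_deriv y (Set.Ioo_subset_Icc_self hy)).deriv
    exact (measurable_deriv h).aestronglyMeasurable.congr hae
  -- pointwise bound |h'| ≤ h'²/(4M) + M
  have h4M : (0:ℝ) < 4 * M := by linarith
  have hptwise : ∀ y : ℝ, |h' y| ≤ (h' y) ^ 2 / (4 * M) + M := by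
    intro y
    have key : |h' y| - M ≤ (h' y) ^ 2 / (4 * M) := by
      rw [le_div_iff₀ h4M]
      nlinarith [sq_nonneg (|h' y| - 2 * M), sq_abs (h' y)]
    linarith
  -- h' integrable
  have hgint : IntegrableOn (fun y => (h' y) ^ 2 / (4 * M) + M) (Set.Ioo (0:ℝ) M) :=
    (hh'2.div_const (4 * M)).add (integrableOn_const hμfin.ne)
  have hint : IntegrableOn h' (Set.Ioo (0:ℝ) M) := by
    refine hgint.mono' hmeas ?_
    filter_upwards with y
    rw [Real.norm_eq_abs]; exact hptwise y
  have habs_int : IntegrableOn (fun y => |h' y|) (Set.Ioo (0:ℝ) M) := hint.abs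
  set A := ∫ y in Set.Ioo (0:ℝ) M, |h' y| with hAdef
  have hA_nonneg : 0 ≤ A :=
    setIntegral_nonneg measurableSet_Ioo fun y _ => abs_nonneg _
  have hD_nonneg : 0 ≤ D :=
    setIntegral_nonneg measurableSet_Ioo fun y _ => sq_nonneg _
  -- bound on A
  have hA_bound : A ≤ D / (4 * M) + M * M := by
    have := setIntegral_mono_on habs_int hgint measurableSet_Ioo fun y _ => hptwise y
    calc A ≤ ∫ y in Set.Ioo (0:ℝ) M, ((h' y) ^ 2 / (4 * M) + M) := this
      _ = D / (4 * M) + M * M := by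
          rw [integral_add (hh'2.div_const (4 * M)) (integrableOn_const hμfin.ne),
            integral_div, setIntegral_const, measureReal_def, hμreal, smul_eq_mul]
  -- existence of a point where Φ (h y₀) ≥ 1/M
  have hΦint : IntegrableOn (fun y => Φ (h y)) (Set.Ioo (0:ℝ) M) := by
    by_contra hc
    rw [integral_undef hc] at hmass
    norm_num at hmass
  obtain ⟨y₀, hy₀mem, hy₀⟩ : ∃ y₀ ∈ Set.Ioo (0:ℝ) M, M⁻¹ ≤ Φ (h y₀) := by
    by_contra hcon
    push_neg at hcon
    have hconst : IntegrableOn (fun _ : ℝ => M⁻¹) (Set.Ioo (0:ℝ) M) :=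
      integrableOn_const hμfin.ne
    have hg : IntegrableOn (fun y => M⁻¹ - Φ (h y)) (Set.Ioo (0:ℝ) M) := hconst.sub hΦint
    have hgzero : (∫ y in Set.Ioo (0:ℝ) M, (M⁻¹ - Φ (h y))) = 0 := by
      rw [integral_sub hconst hΦint, hmass, setIntegral_const, measureReal_def, hμreal, smul_eq_mul]
      field_simp; ring
    have hge : 0 ≤ᵐ[volume.restrict (Set.Ioo (0:ℝ) M)] fun y => M⁻¹ - Φ (h y) := by
      filter_upwards [ae_restrict_mem measurableSet_Ioo] with y hy
      exact sub_nonneg.mpr (hcon y hy).le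
    have hzero := (integral_eq_zero_iff_of_nonneg_ae hge hg).mp hgzero
    have hbad : ∀ᵐ y ∂(volume.restrict (Set.Ioo (0:ℝ) M)), False := by
      filter_upwards [hzero, ae_restrict_mem measurableSet_Ioo] with y h0 hy
      have h1 := hcon y hy
      simp only [Pi.zero_apply] at h0
      linarith
    have : volume.restrict (Set.Ioo (0:ℝ) M) = 0 :=
      ae_eq_bot.mp (Filter.eventually_false_iff_eq_bot.mp hbad)
    have h2 : volume (Set.Ioo (0:ℝ) M) = 0 := Measure.restrict_eq_zero.mp this
    rw [hμ] at h2
    exact absurd h2 (by simp [hM])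
  obtain ⟨r₀, hr₀pos, hr₀⟩ := hrange y₀ (Set.Ioo_subset_Icc_self hy₀mem)
  have hr₀M : M⁻¹ ≤ r₀ := by
    rw [← hr₀, hΦ r₀ hr₀pos] at hy₀; exact hy₀
  have hy₀lb : Ψ M⁻¹ ≤ h y₀ := by
    rw [← hr₀]
    exact hΨ_mono.monotoneOn (Set.mem_Ioi.mpr (inv_pos.mpr hM))
      (Set.mem_Ioi.mpr hr₀pos) hr₀M
  -- FTC bound
  have hdiff : ∀ y ∈ Set.Ioo (0:ℝ) M, |h y - h y₀| ≤ A := by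
    intro y hy
    have hsub : Set.uIcc y₀ y ⊆ Set.Icc 0 M := by
      intro t ht
      rw [Set.mem_uIcc] at ht
      rcases ht with ⟨h1, h2⟩ | ⟨h1, h2⟩
      · exact ⟨le_trans hy₀mem.1.le h1, le_trans h2 hy.2.le⟩
      · exact ⟨le_trans hy.1.le h1, le_trans h2 hy₀mem.2.le⟩
    have hsub' : Set.uIoc y₀ y ⊆ Set.Ioo 0 M := by
      intro t ht
      rw [Set.mem_uIoc] at ht
      rcases ht with ⟨h1, h2⟩ | ⟨h1, h2⟩
      · exact ⟨lt_trans hy₀mem.1 h1, lt_of_le_of_lt h2 hy.2⟩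
      · exact ⟨lt_trans hy.1 h1, lt_of_le_of_lt h2 hy₀mem.2⟩
    have hii : IntervalIntegrable h' volume y₀ y :=
      intervalIntegrable_iff.mpr (hint.mono_set hsub')
    have hftc : (∫ t in y₀..y, h' t) = h y - h y₀ :=
      intervalIntegral.integral_eq_sub_of_hasDerivAt (fun t ht => hh_deriv t (hsub ht)) hii
    rw [← hftc]
    calc |∫ t in y₀..y, h' t| ≤ ∫ t in Set.uIoc y₀ y, |h' t| := by
          have := intervalIntegral.norm_integral_le_integral_norm_uIoc (f := h') (a := y₀)
            (b := y) (μ := volume)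
          simpa [Real.norm_eq_abs] using this
      _ ≤ A := by
          refine setIntegral_mono_set habs_int ?_ (HasSubset.Subset.eventuallyLE hsub')
          filter_upwards with t using abs_nonneg _
  -- lower bound on the negative-part integrand
  set C := |Ψ M⁻¹| + A with hCdef
  have hC_nonneg : 0 ≤ C := add_nonneg (abs_nonneg _) hA_nonneg
  have hflb : ∀ y ∈ Set.Ioo (0:ℝ) M, -C ≤ (if h y < 0 then h y else 0) := by
    intro y hy
    split
    · have h1 := (abs_le.mp (hdiff y hy)).1
      have h2 := neg_abs_le (Ψ M⁻¹)
      simp only [hCdef]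
      linarith
    · linarith
  -- integrability of the negative part
  have hfint : IntegrableOn (fun y => if h y < 0 then h y else 0) (Set.Ioo (0:ℝ) M) := by
    have heq : (fun y => if h y < 0 then h y else 0) = fun y => min (h y) 0 := by
      funext y
      rcases lt_trichotomy (h y) 0 with hc | hc | hc
      · simp [hc, min_eq_left hc.le]
      · simp [hc]
      · simp [not_lt.mpr hc.le, min_eq_right hc.le]
    rw [heq]
    have hc : ContinuousOn (fun y => min (h y) 0) (Set.Icc 0 M) :=
      fun y hy => (hh_cont y hy).min continuousWithinAt_const
    exact (hc.integrableOn_Icc).mono_set Set.Ioo_subset_Icc_self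
  have hconstC : IntegrableOn (fun _ : ℝ => -C) (Set.Ioo (0:ℝ) M) :=
    integrableOn_const hμfin.ne
  have hI : -(M * C) ≤ ∫ y in Set.Ioo (0:ℝ) M, (if h y < 0 then h y else 0) := by
    have := setIntegral_mono_on hconstC hfint measurableSet_Ioo hflb
    rwa [setIntegral_const, measureReal_def, hμreal, smul_eq_mul, mul_neg] at this
  have hMA : M * A ≤ D / 4 + M ^ 3 := by
    have h1 : M * (D / (4 * M)) = D / 4 := by field_simp
    have := mul_le_mul_of_nonneg_left hA_bound hM.le
    nlinarith
  have hexp : M * C = M * |Ψ M⁻¹| + M * A := by rw [hCdef]; ring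
  clear_value D A C
  have hIlb : -(M * |Ψ M⁻¹|) - (D / 4 + M ^ 3) ≤
      ∫ y in Set.Ioo (0:ℝ) M, (if h y < 0 then h y else 0) := by linarith
  linarith
end
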